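/- There exist nonrepetitive sequences of every length over a 3-element alphabet (Thue's theorem): for every n there is a sequence of length n over {1,2,3} containing no two identical adjacent blocks. -/
import Mathlib

def tm : ℕ → Bool
  | 0 => false
  | (n+1) => xor (n+1).bodd (tm ((n+1)/2))
decreasing_by exact Nat.div_lt_self (Nat.succ_pos n) (by norm_num)

lemma tm_rec (n : ℕ) (hn : 0 < n) : tm n = xor n.bodd (tm (n/2)) := by
  obtain ⟨m, rfl⟩ := Nat.exists_eq_succ_of_ne_zero hn.ne'
  rw [tm]

lemma tm_two_mul (n : ℕ) : tm (2*n) = tm n := by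
  rcases Nat.eq_zero_or_pos n with rfl | hn
  · rfl
  · rw [tm_rec (2*n) (by omega)]
    simp [Nat.bodd_mul]

lemma tm_two_mul_add_one (n : ℕ) : tm (2*n+1) = !(tm n) := by
  rw [tm_rec (2*n+1) (by omega)]
  have h2 : (2*n+1)/2 = n := by omega
  have h1 : (2*n+1).bodd = true := by simp [Nat.bodd_add, Nat.bodd_mul]
  rw [h1, h2]
  cases tm n <;> rfl

lemma tm_pair (m : ℕ) : tm (2*m) ≠ tm (2*m+1) := by
  rw [tm_two_mul, tm_two_mul_add_one]
  cases tm m <;> simp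

lemma tm_no3 (k : ℕ) : ¬(tm k = tm (k+1) ∧ tm (k+1) = tm (k+2)) := by
  rintro ⟨e1, e2⟩
  rcases Nat.even_or_odd k with ⟨m, rfl⟩ | ⟨m, rfl⟩
  · have e1' : tm (2*m) = tm (2*m+1) := by convert e1 using 2 <;> omega
    exact tm_pair m e1'
  · have e2' : tm (2*(m+1)) = tm (2*(m+1)+1) := by convert e2 using 2 <;> omega
    exact tm_pair (m+1) e2'

lemma tm_overlapfree : ∀ h, 1 ≤ h → ∀ i, ¬ (∀ j ≤ h, tm (i+j) = tm (i+h+j)) := by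
  intro h
  induction h using Nat.strong_induction_on with
  | _ h IH =>
    intro h1 i H
    have Hk : ∀ k, i ≤ k → k ≤ i + h → tm k = tm (k+h) := by
      intro k hk1 hk2
      have := H (k-i) (by omega)
      rw [show i+(k-i) = k from by omega, show i+h+(k-i) = k+h from by omega] at this
      exact this
    rcases Nat.even_or_odd h with ⟨h', hh⟩ | ⟨h', hh⟩
    · -- h even, h = h'+h', reduce to h'
      have hh2 : h = 2*h' := by omega
      have hp1 : 1 ≤ h' := by omega
      rcases Nat.even_or_odd i with ⟨i', hi⟩ | ⟨i', hi⟩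
      · refine IH h' (by omega) hp1 i' ?_
        intro j' hj'
        have := H (2*j') (by omega)
        rw [show i + 2*j' = 2*(i'+j') from by omega,
            show i + h + 2*j' = 2*(i'+h'+j') from by omega,
            tm_two_mul, tm_two_mul] at this
        exact this
      · refine IH h' (by omega) hp1 i' ?_
        intro j' hj'
        have := H (2*j') (by omega)
        rw [show i + 2*j' = 2*(i'+j')+1 from by omega,
            show i + h + 2*j' = 2*(i'+h'+j')+1 from by omega,
            tm_two_mul_add_one, tm_two_mul_add_one] at this
        exact Bool.not_inj this
    · -- h odd, h = 2h'+1
      have hh2 : h = 2*h' + 1 := by omega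
      rcases Nat.eq_zero_or_pos h' with rfl | hp1
      · -- h = 1 : three equal consecutive
        have e1 := Hk i (le_refl i) (by omega)
        have e2 := Hk (i+1) (by omega) (by omega)
        exact tm_no3 i ⟨by rw [e1]; congr 1; omega, by rw [e2]; congr 1; omega⟩
      · -- h odd ≥ 3
        have HA : ∀ m, i ≤ 2*m+1 → 2*m+2 ≤ i + 2*h - 1 → tm m = tm (m+1) := by
          intro m hm1 hm2
          have key : tm (2*m+1) ≠ tm (2*m+2) := by
            rcases le_or_gt (2*m+1) (i+h-1) with hc | hc
            · have e1 := Hk (2*m+1) (by omega) (by omega)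
              have e2 := Hk (2*m+2) (by omega) (by omega)
              have pr : tm (2*m+1+h) ≠ tm (2*m+2+h) := by
                rw [show 2*m+1+h = 2*(m+h'+1) from by omega,
                    show 2*m+2+h = 2*(m+h'+1)+1 from by omega]
                exact tm_pair _
              rw [e1, e2]; exact pr
            · have e1 := Hk (2*(m-h')) (by omega) (by omega)
              have e2 := Hk (2*(m-h')+1) (by omega) (by omega)
              rw [show 2*(m-h')+h = 2*m+1 from by omega] at e1
              rw [show 2*(m-h')+1+h = 2*m+2 from by omega] at e2
              rw [← e1, ← e2]; exact tm_pair _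
          rw [tm_two_mul_add_one, show 2*m+2 = 2*(m+1) from by omega, tm_two_mul] at key
          cases hb : tm m <;> cases hb2 : tm (m+1) <;> simp_all
        have t1 := HA (i/2) (by omega) (by omega)
        have t2 := HA (i/2+1) (by omega) (by omega)
        exact tm_no3 (i/2) ⟨t1, by convert t2 using 2 <;> omega⟩

noncomputable def thue (n : ℕ) : Fin 3 :=
  if tm n = tm (n+1) then 2 else if tm n then 1 else 0

lemma thue_eq_two_iff (n : ℕ) : thue n = 2 ↔ tm n = tm (n+1) := by
  constructor
  · intro he
    by_contra hc
    unfold thue at he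
    rw [if_neg hc] at he
    revert he
    split <;> decide
  · intro hc
    unfold thue
    rw [if_pos hc]

lemma thue_Q {p q : ℕ} (he : thue p = thue q) (h2 : thue p ≠ 2) : tm p = tm q := by
  have hp : ¬ (tm p = tm (p+1)) := fun hc => h2 ((thue_eq_two_iff p).2 hc)
  have hq : ¬ (tm q = tm (q+1)) := fun hc => (he ▸ h2) ((thue_eq_two_iff q).2 hc)
  unfold thue at he
  rw [if_neg hp, if_neg hq] at he
  cases hb : tm p <;> cases hb2 : tm q <;> simp_all <;> exact absurd he (by decide)

lemma thue_P {p q : ℕ} (he : thue p = thue q) (ht : tm p = tm q) :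
    tm (p+1) = tm (q+1) := by
  by_cases h2 : thue p = 2
  · have hp := (thue_eq_two_iff p).1 h2
    have hq := (thue_eq_two_iff q).1 (he ▸ h2)
    rw [← hp, ← hq]; exact ht
  · have hp : tm p ≠ tm (p+1) := fun hc => h2 ((thue_eq_two_iff p).2 hc)
    have hq : tm q ≠ tm (q+1) := fun hc => (he ▸ h2) ((thue_eq_two_iff q).2 hc)
    cases hb : tm p <;> cases hb2 : tm q <;> cases hc : tm (p+1) <;> cases hd : tm (q+1) <;>
      simp_all

/-- Thue: for every n there is a nonrepetitive sequence of length n over a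
3-element alphabet. -/
theorem stmt_1 (n : ℕ) :
    ∃ a : ℕ → Fin 3, ∀ i h : ℕ, 1 ≤ h → i + 2 * h ≤ n →
      ∃ j < h, a (i + j) ≠ a (i + h + j) := by
  refine ⟨thue, fun i h h1 _ => ?_⟩
  by_contra hcon
  push_neg at hcon
  -- hcon : ∀ j < h, thue (i+j) = thue (i+h+j)
  -- Step 1: tm i = tm (i+h)
  have base : tm i = tm (i+h) := by
    by_cases hA : thue i = 2
    · have e0 : tm i = tm (i+1) := (thue_eq_two_iff i).1 hA
      have hc0 := hcon 0 h1
      simp only [Nat.add_zero] at hc0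
      have hAh : thue (i+h) = 2 := by rw [← hc0]; exact hA
      have eh : tm (i+h) = tm (i+h+1) := by
        have := (thue_eq_two_iff (i+h)).1 hAh
        convert this using 2
      rcases Nat.lt_or_ge h 2 with hh | hh
      · -- h = 1
        have h1' : h = 1 := by omega
        subst h1'
        exact absurd ⟨e0, by convert eh using 2 <;> omega⟩ (tm_no3 i)
      · -- h ≥ 2 : thue (i+1) ≠ 2
        have hB : thue (i+1) ≠ 2 := by
          intro hc
          exact tm_no3 i ⟨e0, by
            have := (thue_eq_two_iff (i+1)).1 hc
            convert this using 2 <;> omega⟩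
        have e1 : tm (i+1) = tm (i+h+1) := by
          have hcc := hcon 1 (by omega)
          have := thue_Q hcc hB
          convert this using 2 <;> omega
        rw [e0, e1, ← eh]
    · have := hcon 0 h1
      simp only [Nat.add_zero] at this
      have := thue_Q (p := i) (q := i+h) (by simpa using this) hA
      exact this
  -- Step 2: forward propagation
  have prop : ∀ j, j ≤ h → tm (i+j) = tm (i+h+j) := by
    intro j
    induction j with
    | zero => intro _; simpa using base
    | succ j ih =>
      intro hj
      have e := ih (by omega)
      have a := hcon j (by omega)
      have := thue_P a e
      rw [show i+j+1 = i+(j+1) from by omega, show i+h+j+1 = i+h+(j+1) from by omega] at this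
      exact this
  exact tm_overlapfree h h1 i prop
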